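/- Let S be a countable set, ε > 0, α > 0, M > 0, and δ > 0 such that β := (1/α)(‖c‖δ + 2Mδ/ε) < 1, where c : S × U → [0,∞) is bounded. Then the operator T on C_b([ε, ε+δ] × S) defined by (Tf)(η,i) = e^{(ε/α)‖c‖} + (1/α) ∫_ε^η inf_{u ∈ U_i} [ c(i,u) f(θ,i) + (1/θ) ∑_j λ_{ij}(u) f(θ,j) ] dθ is a contraction with constant β, and hence has a unique fixed point in C_b([ε, ε+δ] × S). -/

import Mathlib

open MeasureTheory Real

section AuxSInf

variable {A : Type*}

lemma bddBelow_image_of_le {φ : A → ℝ} {K : Set A} {L : ℝ}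
    (h : ∀ u ∈ K, L ≤ φ u) : BddBelow (φ '' K) :=
  ⟨L, by rintro b ⟨u, hu, rfl⟩; exact h u hu⟩

lemma le_sInf_image {φ : A → ℝ} {K : Set A} (hK : K.Nonempty) {L : ℝ}
    (h : ∀ u ∈ K, L ≤ φ u) : L ≤ sInf (φ '' K) :=
  le_csInf (hK.image φ) (by rintro b ⟨u, hu, rfl⟩; exact h u hu)

lemma sInf_image_le {φ : A → ℝ} {K : Set A} {L : ℝ} (h : ∀ u ∈ K, L ≤ φ u)
    {u : A} (hu : u ∈ K) : sInf (φ '' K) ≤ φ u :=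
  csInf_le (bddBelow_image_of_le h) ⟨u, hu, rfl⟩

lemma abs_sInf_sub_sInf_le {φ ψ : A → ℝ} {K : Set A} (hK : K.Nonempty) {L L' r : ℝ}
    (hφ : ∀ u ∈ K, L ≤ φ u) (hψ : ∀ u ∈ K, L' ≤ ψ u)
    (h : ∀ u ∈ K, |φ u - ψ u| ≤ r) : |sInf (φ '' K) - sInf (ψ '' K)| ≤ r := by
  rw [abs_sub_le_iff]
  constructor
  · have h1 : ∀ u ∈ K, sInf (φ '' K) - r ≤ ψ u := fun u hu => by
      have h2 := sInf_image_le hφ hu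
      have h3 := (abs_sub_le_iff.mp (h u hu)).1
      linarith
    have := le_sInf_image hK h1
    linarith
  · have h1 : ∀ u ∈ K, sInf (ψ '' K) - r ≤ φ u := fun u hu => by
      have h2 := sInf_image_le hψ hu
      have h3 := (abs_sub_le_iff.mp (h u hu)).2
      linarith
    have := le_sInf_image hK h1
    linarith

lemma measurable_sInf_param {Φ : A → ℝ → ℝ} {K : Set A} (hK : K.Nonempty)
    (hc : ∀ u ∈ K, Continuous (Φ u)) {L : ℝ} (hL : ∀ t : ℝ, ∀ u ∈ K, L ≤ Φ u t) :
    Measurable fun t => sInf ((fun u => Φ u t) '' K) := by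
  apply measurable_of_Iio
  intro a
  have hset : (fun t => sInf ((fun u => Φ u t) '' K)) ⁻¹' Set.Iio a
      = ⋃ u ∈ K, {t | Φ u t < a} := by
    ext t
    simp only [Set.mem_preimage, Set.mem_Iio, Set.mem_iUnion, Set.mem_setOf_eq]
    rw [csInf_lt_iff (bddBelow_image_of_le (hL t)) (hK.image _)]
    constructor
    · rintro ⟨b, ⟨u, hu, rfl⟩, hb⟩; exact ⟨u, hu, hb⟩
    · rintro ⟨u, hu, hb⟩; exact ⟨Φ u t, ⟨u, hu, rfl⟩, hb⟩
  rw [hset]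
  exact (isOpen_biUnion fun u hu => isOpen_lt (hc u hu) continuous_const).measurableSet

lemma intervalIntegrable_of_bounded {f : ℝ → ℝ} (hm : Measurable f) {K : ℝ}
    (hK : ∀ t, |f t| ≤ K) (a b : ℝ) : IntervalIntegrable f volume a b := by
  rw [intervalIntegrable_iff]
  refine Integrable.mono' ((integrableOn_const_iff).mpr (Or.inr ?_))
    hm.aestronglyMeasurable.restrict (ae_of_all _ fun t => by simpa using hK t)
  rw [Set.uIoc]
  exact measure_Ioc_lt_top

lemma continuous_of_discrete_slices {X J Y : Type*} [TopologicalSpace X] [TopologicalSpace J]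
    [DiscreteTopology J] [TopologicalSpace Y] {f : X × J → Y}
    (h : ∀ j, Continuous fun x => f (x, j)) : Continuous f := by
  rw [continuous_iff_continuousAt]
  rintro ⟨x, j⟩
  have hg : ContinuousAt (fun p : X × J => f (p.1, j)) (x, j) :=
    ((h j).comp continuous_fst).continuousAt
  apply ContinuousAt.congr hg
  have hmem : {p : X × J | p.2 = j} ∈ nhds (x, j) := by
    have ho : IsOpen {p : X × J | p.2 = j} :=
      (isOpen_discrete ({j} : Set J)).preimage continuous_snd
    exact ho.mem_nhds rfl
  filter_upwards [hmem] with p hp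
  obtain ⟨px, pj⟩ := p
  have hpj : pj = j := hp
  subst hpj
  rfl

end AuxSInf

section AuxSum

variable {S A : Type*}

lemma abs_lam_facts (lam : S → S → A → ℝ)
    (hod : ∀ i j u, i ≠ j → 0 ≤ lam i j u) (hsum : ∀ i u, Summable fun j => lam i j u)
    (hrow : ∀ i u, ∑' j, lam i j u = 0) {M : ℝ} (hbd : ∀ i u, -lam i i u ≤ M)
    (i : S) (u : A) :
    Summable (fun j => |lam i j u|) ∧ ∑' j, |lam i j u| ≤ 2 * M := by
  classical
  have hS := hsum i u
  have hii : lam i i u ≤ 0 := by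
    have h0 := hrow i u
    rw [Summable.tsum_eq_add_tsum_ite hS i] at h0
    have hpos : 0 ≤ ∑' j, if j = i then 0 else lam i j u := by
      refine tsum_nonneg fun j => ?_
      by_cases h : j = i
      · simp [h]
      · simpa [h] using hod i j u (Ne.symm h)
    linarith
  have habs : Summable fun j => |lam i j u| := summable_abs_iff.mpr hS
  refine ⟨habs, ?_⟩
  have heq : ∀ j, |lam i j u| = (if j = i then -2 * lam i i u else 0) + lam i j u := by
    intro j
    by_cases h : j = i
    · subst h; rw [abs_of_nonpos hii]; simp; ring
    · rw [abs_of_nonneg (hod i j u (Ne.symm h))]; simp [h]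
  have hsupp : Summable fun j => if j = i then -2 * lam i i u else 0 :=
    summable_of_ne_finset_zero (s := {i}) (fun b hb => by
      simp only [Finset.mem_singleton] at hb; simp [hb])
  calc ∑' j, |lam i j u|
      = ∑' j, ((if j = i then -2 * lam i i u else 0) + lam i j u) := tsum_congr heq
    _ = (∑' j, if j = i then -2 * lam i i u else 0) + ∑' j, lam i j u :=
        Summable.tsum_add hsupp hS
    _ = -2 * lam i i u + 0 := by rw [tsum_ite_eq, hrow]
    _ ≤ 2 * M := by have := hbd i u; linarith

lemma summable_mul_F {w : S → ℝ} (hw : Summable fun j => |w j|) {F : S → ℝ} {B : ℝ}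
    (hF : ∀ j, |F j| ≤ B) : Summable fun j => w j * F j := by
  refine summable_abs_iff.mp ?_
  refine Summable.of_nonneg_of_le (fun j => abs_nonneg _) (fun j => ?_) (hw.mul_right B)
  rw [abs_mul]
  exact mul_le_mul_of_nonneg_left (hF j) (abs_nonneg _)

lemma abs_tsum_mul_le {w : S → ℝ} (hw : Summable fun j => |w j|) {F : S → ℝ} {B : ℝ}
    (hF : ∀ j, |F j| ≤ B) (hB : 0 ≤ B) {M2 : ℝ} (hwb : ∑' j, |w j| ≤ M2) :
    |∑' j, w j * F j| ≤ M2 * B := by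
  have habs : Summable fun j => |w j * F j| :=
    Summable.of_nonneg_of_le (fun j => abs_nonneg _)
      (fun j => by rw [abs_mul]; exact mul_le_mul_of_nonneg_left (hF j) (abs_nonneg _))
      (hw.mul_right B)
  calc |∑' j, w j * F j| ≤ ∑' j, |w j * F j| := by
        simpa only [Real.norm_eq_abs] using norm_tsum_le_tsum_norm (f := fun j => w j * F j)
          (by simpa only [Real.norm_eq_abs] using habs)
    _ ≤ ∑' j, |w j| * B := Summable.tsum_le_tsum (fun j => by
        rw [abs_mul]; exact mul_le_mul_of_nonneg_left (hF j) (abs_nonneg _)) habs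
          (hw.mul_right B)
    _ = (∑' j, |w j|) * B := tsum_mul_right
    _ ≤ M2 * B := mul_le_mul_of_nonneg_right hwb hB

end AuxSum

section AuxPhi

variable {S A : Type*}

lemma phi_abs_bound {K : Set A} {a : A → ℝ} {Cc : ℝ}
    (ha0 : ∀ u ∈ K, 0 ≤ a u) (haC : ∀ u ∈ K, a u ≤ Cc)
    {w : A → S → ℝ} {M2 : ℝ}
    (hw : ∀ u ∈ K, Summable fun j => |w u j|) (hwb : ∀ u ∈ K, ∑' j, |w u j| ≤ M2)
    {ε : ℝ} (hε : 0 < ε) {b : ℝ → ℝ} {F : ℝ → S → ℝ} {B : ℝ} (hB : 0 ≤ B)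
    (hbB : ∀ t, |b t| ≤ B) (hFB : ∀ t j, |F t j| ≤ B)
    {u : A} (hu : u ∈ K) (t : ℝ) :
    |a u * b t + (1 / max t ε) * ∑' j, w u j * F t j| ≤ Cc * B + M2 * B / ε := by
  have h1 : |a u * b t| ≤ Cc * B := by
    rw [abs_mul, abs_of_nonneg (ha0 u hu)]
    exact mul_le_mul (haC u hu) (hbB t) (abs_nonneg _) ((ha0 u hu).trans (haC u hu))
  have htsum : |∑' j, w u j * F t j| ≤ M2 * B :=
    abs_tsum_mul_le (hw u hu) (fun j => hFB t j) hB (hwb u hu)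
  have hmax : 0 < max t ε := lt_of_lt_of_le hε (le_max_right t ε)
  have h2 : |(1 / max t ε) * ∑' j, w u j * F t j| ≤ M2 * B / ε := by
    rw [abs_mul, abs_of_nonneg (by positivity : (0:ℝ) ≤ 1 / max t ε)]
    calc (1 / max t ε) * |∑' j, w u j * F t j| ≤ (1 / ε) * (M2 * B) :=
          mul_le_mul (one_div_le_one_div_of_le hε (le_max_right t ε)) htsum
            (abs_nonneg _) (by positivity)
      _ = M2 * B / ε := by ring
  calc |a u * b t + (1 / max t ε) * ∑' j, w u j * F t j|
      ≤ |a u * b t| + |(1 / max t ε) * ∑' j, w u j * F t j| := abs_add_le _ _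
    _ ≤ Cc * B + M2 * B / ε := add_le_add h1 h2

lemma phi_diff_bound {K : Set A} {a : A → ℝ} {Cc : ℝ}
    (ha0 : ∀ u ∈ K, 0 ≤ a u) (haC : ∀ u ∈ K, a u ≤ Cc)
    {w : A → S → ℝ} {M2 : ℝ}
    (hw : ∀ u ∈ K, Summable fun j => |w u j|) (hwb : ∀ u ∈ K, ∑' j, |w u j| ≤ M2)
    {ε : ℝ} (hε : 0 < ε) {b b' : ℝ → ℝ} {F F' : ℝ → S → ℝ} {B d : ℝ}
    (hFB : ∀ t j, |F t j| ≤ B) (hF'B : ∀ t j, |F' t j| ≤ B)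
    (hd : 0 ≤ d) (hdb : ∀ t, |b t - b' t| ≤ d) (hdF : ∀ t j, |F t j - F' t j| ≤ d)
    {u : A} (hu : u ∈ K) (t : ℝ) :
    |(a u * b t + (1 / max t ε) * ∑' j, w u j * F t j)
      - (a u * b' t + (1 / max t ε) * ∑' j, w u j * F' t j)| ≤ Cc * d + M2 * d / ε := by
  have hsF : Summable fun j => w u j * F t j := summable_mul_F (hw u hu) (hFB t)
  have hsF' : Summable fun j => w u j * F' t j := summable_mul_F (hw u hu) (hF'B t)
  have hrw : (a u * b t + (1 / max t ε) * ∑' j, w u j * F t j)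
      - (a u * b' t + (1 / max t ε) * ∑' j, w u j * F' t j)
      = a u * ((fun s => b s - b' s) t)
        + (1 / max t ε) * ∑' j, w u j * ((fun s (k : S) => F s k - F' s k) t j) := by
    have hts : ∑' j, w u j * (F t j - F' t j)
        = (∑' j, w u j * F t j) - ∑' j, w u j * F' t j := by
      rw [← Summable.tsum_sub hsF hsF']
      exact tsum_congr fun j => by ring
    simp only []
    rw [hts]
    ring
  rw [hrw]
  exact phi_abs_bound ha0 haC hw hwb hε hd hdb (fun s k => hdF s k) hu t

end AuxPhi

/-- The discounted-cost operator
`(Tf)(η,i) = e^{(ε/α)‖c‖} + (1/α)∫_ε^η inf_{u∈U_i}[c(i,u) f(θ,i) + (1/θ)∑_j λ_{ij}(u) f(θ,j)] dθ`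
is a contraction with constant `β = (1/α)(‖c‖δ + 2Mδ/ε) < 1` on `C_b([ε,ε+δ] × S)`, and hence
has a unique fixed point there. -/
theorem stmt_4 {S : Type*} [Countable S] [Nonempty S]
    {A : Type*} [TopologicalSpace A]
    (U : S → Set A) (hUcomp : ∀ i, IsCompact (U i)) (hUne : ∀ i, (U i).Nonempty)
    (lam : S → S → A → ℝ)
    (hlamcont : ∀ i j, ContinuousOn (lam i j) (U i))
    (hod : ∀ i j u, i ≠ j → 0 ≤ lam i j u)
    (hsum : ∀ i u, Summable (fun j => lam i j u))
    (hrow : ∀ i u, ∑' j, lam i j u = 0)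
    (M : ℝ) (hM : 0 < M) (hbd : ∀ i u, -lam i i u ≤ M)
    (c : S → A → ℝ) (Cc : ℝ)
    (hccont : ∀ i, ContinuousOn (c i) (U i))
    (hc0 : ∀ i u, 0 ≤ c i u) (hcb : ∀ i u, c i u ≤ Cc)
    (ε α δ : ℝ) (hε : 0 < ε) (hα : 0 < α) (hδ : 0 < δ)
    (β : ℝ) (hβdef : β = (1 / α) * (Cc * δ + 2 * M * δ / ε)) (hβ : β < 1) :
    (∀ f₁ f₂ : ℝ → S → ℝ, ∀ d : ℝ,
      (∀ t ∈ Set.Icc ε (ε + δ), ∀ j : S, |f₁ t j - f₂ t j| ≤ d) →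
      (∀ j, ContinuousOn (fun t => f₁ t j) (Set.Icc ε (ε + δ))) →
      (∀ j, ContinuousOn (fun t => f₂ t j) (Set.Icc ε (ε + δ))) →
      (∃ B₁, ∀ t j, |f₁ t j| ≤ B₁) → (∃ B₂, ∀ t j, |f₂ t j| ≤ B₂) →
      ∀ η ∈ Set.Icc ε (ε + δ), ∀ i : S,
        |(Real.exp ((ε / α) * Cc) + (1 / α) * ∫ t in ε..η,
              sInf ((fun u => c i u * f₁ t i + (1 / t) * ∑' j, lam i j u * f₁ t j) '' U i))
          - (Real.exp ((ε / α) * Cc) + (1 / α) * ∫ t in ε..η,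
              sInf ((fun u => c i u * f₂ t i + (1 / t) * ∑' j, lam i j u * f₂ t j) '' U i))|
          ≤ β * d) ∧
    ∃ f : ℝ → S → ℝ,
      ((∃ B, ∀ t j, |f t j| ≤ B) ∧
        (∀ j, ContinuousOn (fun t => f t j) (Set.Icc ε (ε + δ))) ∧
        ∀ η ∈ Set.Icc ε (ε + δ), ∀ i : S,
          f η i = Real.exp ((ε / α) * Cc) + (1 / α) * ∫ t in ε..η,
              sInf ((fun u => c i u * f t i + (1 / t) * ∑' j, lam i j u * f t j) '' U i)) ∧
      ∀ f' : ℝ → S → ℝ,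
        ((∃ B, ∀ t j, |f' t j| ≤ B) ∧
          (∀ j, ContinuousOn (fun t => f' t j) (Set.Icc ε (ε + δ))) ∧
          ∀ η ∈ Set.Icc ε (ε + δ), ∀ i : S,
            f' η i = Real.exp ((ε / α) * Cc) + (1 / α) * ∫ t in ε..η,
                sInf ((fun u => c i u * f' t i + (1 / t) * ∑' j, lam i j u * f' t j) '' U i)) →
        ∀ η ∈ Set.Icc ε (ε + δ), ∀ i : S, f' η i = f η i := by
  have hle : ε ≤ ε + δ := by linarith
  have hCc : 0 ≤ Cc := by
    obtain ⟨i₀⟩ := (inferInstance : Nonempty S)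
    obtain ⟨u₀, hu₀⟩ := hUne i₀
    exact (hc0 i₀ u₀).trans (hcb i₀ u₀)
  have hw : ∀ (i : S), ∀ u ∈ U i, Summable fun j => |lam i j u| :=
    fun i u _ => (abs_lam_facts lam hod hsum hrow hbd i u).1
  have hwb : ∀ (i : S), ∀ u ∈ U i, ∑' j, |lam i j u| ≤ 2 * M :=
    fun i u _ => (abs_lam_facts lam hod hsum hrow hbd i u).2
  have hproj : ∀ t : ℝ, ∀ ht : t ∈ Set.Icc ε (ε + δ),
      (↑(Set.projIcc ε (ε + δ) hle t) : ℝ) = t := by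
    intro t ht
    rw [Set.projIcc_of_mem hle ht]
  -- master measurability and bound
  have main_meas : ∀ (F : ℝ → S → ℝ) (B : ℝ), 0 ≤ B → (∀ j, Continuous fun t => F t j) →
      (∀ t j, |F t j| ≤ B) → ∀ i : S,
      Measurable (fun t => sInf ((fun u => c i u * F t i
          + (1 / max t ε) * ∑' j, lam i j u * F t j) '' U i))
      ∧ ∀ t, |sInf ((fun u => c i u * F t i
          + (1 / max t ε) * ∑' j, lam i j u * F t j) '' U i)| ≤ Cc * B + 2 * M * B / ε := by
    intro F B hB hFc hFB i
    have hphi : ∀ u ∈ U i, ∀ t : ℝ,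
        |c i u * F t i + (1 / max t ε) * ∑' j, lam i j u * F t j|
          ≤ Cc * B + 2 * M * B / ε := fun u hu t =>
      phi_abs_bound (fun u _ => hc0 i u) (fun u _ => hcb i u) (hw i) (hwb i) hε hB
        (fun t => hFB t i) hFB hu t
    have hlow : ∀ t : ℝ, ∀ u ∈ U i, -(Cc * B + 2 * M * B / ε)
        ≤ c i u * F t i + (1 / max t ε) * ∑' j, lam i j u * F t j :=
      fun t u hu => neg_le_of_abs_le (hphi u hu t)
    constructor
    · have hcont : ∀ u ∈ U i, Continuous fun t =>
          c i u * F t i + (1 / max t ε) * ∑' j, lam i j u * F t j := by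
        intro u hu
        refine (continuous_const.mul (hFc i)).add (Continuous.mul ?_ ?_)
        · exact continuous_const.div (continuous_id.max continuous_const)
            (fun t => ne_of_gt (lt_of_lt_of_le hε (le_max_right t ε)))
        · exact continuous_tsum (fun j => continuous_const.mul (hFc j))
            ((hw i u hu).mul_right B)
            (fun j t => by
              rw [Real.norm_eq_abs, abs_mul]
              exact mul_le_mul_of_nonneg_left (hFB t j) (abs_nonneg _))
      exact measurable_sInf_param (hUne i) hcont hlow
    · intro t
      rw [abs_le]
      constructor
      · exact le_sInf_image (hUne i) (hlow t)
      · obtain ⟨u₀, hu₀⟩ := hUne i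
        exact (sInf_image_le (hlow t) hu₀).trans (le_of_abs_le (hphi u₀ hu₀ t))
  -- master difference bound
  have main_diff : ∀ (F₁ F₂ : ℝ → S → ℝ) (B d : ℝ), 0 ≤ d →
      (∀ t j, |F₁ t j| ≤ B) → (∀ t j, |F₂ t j| ≤ B) →
      (∀ t j, |F₁ t j - F₂ t j| ≤ d) → ∀ (i : S) (t : ℝ),
      |sInf ((fun u => c i u * F₁ t i + (1 / max t ε) * ∑' j, lam i j u * F₁ t j) '' U i)
        - sInf ((fun u => c i u * F₂ t i + (1 / max t ε) * ∑' j, lam i j u * F₂ t j) '' U i)|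
        ≤ Cc * d + 2 * M * d / ε := by
    intro F₁ F₂ B d hd h1 h2 hdF i t
    have hB : 0 ≤ B := (abs_nonneg _).trans (h1 0 (Classical.ofNonempty))
    refine abs_sInf_sub_sInf_le (hUne i)
      (L := -(Cc * B + 2 * M * B / ε)) (L' := -(Cc * B + 2 * M * B / ε))
      (fun u hu => neg_le_of_abs_le (phi_abs_bound (fun u _ => hc0 i u) (fun u _ => hcb i u)
        (hw i) (hwb i) hε hB (fun t => h1 t i) h1 hu t))
      (fun u hu => neg_le_of_abs_le (phi_abs_bound (fun u _ => hc0 i u) (fun u _ => hcb i u)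
        (hw i) (hwb i) hε hB (fun t => h2 t i) h2 hu t))
      (fun u hu => phi_diff_bound (fun u _ => hc0 i u) (fun u _ => hcb i u)
        (hw i) (hwb i) hε h1 h2 hd (fun t => hdF t i) hdF hu t)
  -- the key contraction estimate (first conjunct)
  have key : ∀ f₁ f₂ : ℝ → S → ℝ, ∀ d : ℝ,
      (∀ t ∈ Set.Icc ε (ε + δ), ∀ j : S, |f₁ t j - f₂ t j| ≤ d) →
      (∀ j, ContinuousOn (fun t => f₁ t j) (Set.Icc ε (ε + δ))) →
      (∀ j, ContinuousOn (fun t => f₂ t j) (Set.Icc ε (ε + δ))) →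
      (∃ B₁, ∀ t j, |f₁ t j| ≤ B₁) → (∃ B₂, ∀ t j, |f₂ t j| ≤ B₂) →
      ∀ η ∈ Set.Icc ε (ε + δ), ∀ i : S,
        |(Real.exp ((ε / α) * Cc) + (1 / α) * ∫ t in ε..η,
              sInf ((fun u => c i u * f₁ t i + (1 / t) * ∑' j, lam i j u * f₁ t j) '' U i))
          - (Real.exp ((ε / α) * Cc) + (1 / α) * ∫ t in ε..η,
              sInf ((fun u => c i u * f₂ t i + (1 / t) * ∑' j, lam i j u * f₂ t j) '' U i))|
          ≤ β * d := by
    intro f₁ f₂ d hd hc₁ hc₂ hB₁e hB₂e η hη i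
    obtain ⟨B₁, hB₁⟩ := hB₁e
    obtain ⟨B₂, hB₂⟩ := hB₂e
    have hd0 : 0 ≤ d :=
      (abs_nonneg _).trans (hd ε ⟨le_refl ε, by linarith⟩ Classical.ofNonempty)
    set B := max B₁ B₂ with hBdef
    have hB0 : 0 ≤ B :=
      (abs_nonneg _).trans ((hB₁ 0 Classical.ofNonempty).trans (le_max_left _ _))
    set F₁ : ℝ → S → ℝ := fun t j => f₁ (↑(Set.projIcc ε (ε + δ) hle t) : ℝ) j with hF₁def
    set F₂ : ℝ → S → ℝ := fun t j => f₂ (↑(Set.projIcc ε (ε + δ) hle t) : ℝ) j with hF₂def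
    have hF₁c : ∀ j, Continuous fun t => F₁ t j := fun j =>
      (hc₁ j).comp_continuous (continuous_subtype_val.comp continuous_projIcc)
        (fun t => Subtype.coe_prop _)
    have hF₂c : ∀ j, Continuous fun t => F₂ t j := fun j =>
      (hc₂ j).comp_continuous (continuous_subtype_val.comp continuous_projIcc)
        (fun t => Subtype.coe_prop _)
    have hF₁B : ∀ t j, |F₁ t j| ≤ B := fun t j => (hB₁ _ _).trans (le_max_left _ _)
    have hF₂B : ∀ t j, |F₂ t j| ≤ B := fun t j => (hB₂ _ _).trans (le_max_right _ _)
    have hdF : ∀ t j, |F₁ t j - F₂ t j| ≤ d := fun t j => hd _ (Subtype.coe_prop _) j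
    have hm₁ := main_meas F₁ B hB0 hF₁c hF₁B i
    have hm₂ := main_meas F₂ B hB0 hF₂c hF₂B i
    have hdiff := main_diff F₁ F₂ B d hd0 hF₁B hF₂B hdF i
    have hεη : ε ≤ η := hη.1
    have hEq₁ : Set.EqOn
        (fun t => sInf ((fun u => c i u * f₁ t i + (1 / t) * ∑' j, lam i j u * f₁ t j) '' U i))
        (fun t => sInf ((fun u => c i u * F₁ t i
          + (1 / max t ε) * ∑' j, lam i j u * F₁ t j) '' U i)) (Set.uIcc ε η) := by
      intro t ht
      rw [Set.uIcc_of_le hεη] at ht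
      have htI : t ∈ Set.Icc ε (ε + δ) := ⟨ht.1, ht.2.trans hη.2⟩
      simp only [hF₁def, hproj t htI, max_eq_left ht.1]
    have hEq₂ : Set.EqOn
        (fun t => sInf ((fun u => c i u * f₂ t i + (1 / t) * ∑' j, lam i j u * f₂ t j) '' U i))
        (fun t => sInf ((fun u => c i u * F₂ t i
          + (1 / max t ε) * ∑' j, lam i j u * F₂ t j) '' U i)) (Set.uIcc ε η) := by
      intro t ht
      rw [Set.uIcc_of_le hεη] at ht
      have htI : t ∈ Set.Icc ε (ε + δ) := ⟨ht.1, ht.2.trans hη.2⟩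
      simp only [hF₂def, hproj t htI, max_eq_left ht.1]
    have hInt₁ : IntervalIntegrable (fun t => sInf ((fun u => c i u * F₁ t i
        + (1 / max t ε) * ∑' j, lam i j u * F₁ t j) '' U i)) volume ε η :=
      intervalIntegrable_of_bounded hm₁.1 hm₁.2 ε η
    have hInt₂ : IntervalIntegrable (fun t => sInf ((fun u => c i u * F₂ t i
        + (1 / max t ε) * ∑' j, lam i j u * F₂ t j) '' U i)) volume ε η :=
      intervalIntegrable_of_bounded hm₂.1 hm₂.2 ε η
    rw [intervalIntegral.integral_congr hEq₁, intervalIntegral.integral_congr hEq₂]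
    set I₁ := ∫ t in ε..η, sInf ((fun u => c i u * F₁ t i
      + (1 / max t ε) * ∑' j, lam i j u * F₁ t j) '' U i) with hI₁
    set I₂ := ∫ t in ε..η, sInf ((fun u => c i u * F₂ t i
      + (1 / max t ε) * ∑' j, lam i j u * F₂ t j) '' U i) with hI₂
    have hIdiff : |I₁ - I₂| ≤ (Cc * d + 2 * M * d / ε) * (η - ε) := by
      rw [hI₁, hI₂, ← intervalIntegral.integral_sub hInt₁ hInt₂]
      have hb := intervalIntegral.norm_integral_le_of_norm_le_const
        (C := Cc * d + 2 * M * d / ε) (a := ε) (b := η)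
        (f := fun t => sInf ((fun u => c i u * F₁ t i
            + (1 / max t ε) * ∑' j, lam i j u * F₁ t j) '' U i)
          - sInf ((fun u => c i u * F₂ t i
            + (1 / max t ε) * ∑' j, lam i j u * F₂ t j) '' U i))
        (fun t _ => by rw [Real.norm_eq_abs]; exact hdiff t)
      rwa [Real.norm_eq_abs, abs_of_nonneg (by linarith : (0:ℝ) ≤ η - ε)] at hb
    have hstep : |(Real.exp ((ε / α) * Cc) + (1 / α) * I₁)
        - (Real.exp ((ε / α) * Cc) + (1 / α) * I₂)| = (1 / α) * |I₁ - I₂| := by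
      rw [add_sub_add_left_eq_sub, ← mul_sub, abs_mul,
        abs_of_nonneg (one_div_nonneg.mpr hα.le)]
    rw [hstep, hβdef]
    have hC0 : 0 ≤ Cc * d + 2 * M * d / ε := by
      have h2 : 0 ≤ 2 * M * d / ε := div_nonneg (by nlinarith) hε.le
      nlinarith
    calc (1 / α) * |I₁ - I₂| ≤ (1 / α) * ((Cc * d + 2 * M * d / ε) * (η - ε)) :=
          mul_le_mul_of_nonneg_left hIdiff (one_div_nonneg.mpr hα.le)
      _ ≤ (1 / α) * ((Cc * δ + 2 * M * δ / ε) * d) := by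
          refine mul_le_mul_of_nonneg_left ?_ (one_div_nonneg.mpr hα.le)
          calc (Cc * d + 2 * M * d / ε) * (η - ε) ≤ (Cc * d + 2 * M * d / ε) * δ :=
                mul_le_mul_of_nonneg_left (by linarith [hη.2]) hC0
            _ = (Cc * δ + 2 * M * δ / ε) * d := by ring
      _ = 1 / α * (Cc * δ + 2 * M * δ / ε) * d := by ring
  refine ⟨key, ?_⟩
  -- Part 2: existence and uniqueness of the fixed point via Banach
  letI : TopologicalSpace S := ⊥
  haveI : DiscreteTopology S := ⟨rfl⟩
  haveI : Nonempty (Set.Icc ε (ε + δ)) := ⟨⟨ε, le_refl ε, by linarith⟩⟩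
  have hβ0 : 0 ≤ β := by
    rw [hβdef]
    have h1 : 0 ≤ Cc * δ := mul_nonneg hCc hδ.le
    have h2 : 0 ≤ 2 * M * δ / ε := div_nonneg (by nlinarith) hε.le
    have h3 : 0 ≤ 1 / α := one_div_nonneg.mpr hα.le
    nlinarith
  have hGc : ∀ g : BoundedContinuousFunction (Set.Icc ε (ε + δ) × S) ℝ, ∀ j : S,
      Continuous fun t : ℝ => g (Set.projIcc ε (ε + δ) hle t, j) := fun g j =>
    g.continuous.comp (continuous_projIcc.prodMk continuous_const)
  have hGB : ∀ g : BoundedContinuousFunction (Set.Icc ε (ε + δ) × S) ℝ, ∀ (t : ℝ) (j : S),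
      |g (Set.projIcc ε (ε + δ) hle t, j)| ≤ ‖g‖ := fun g t j => by
    simpa only [Real.norm_eq_abs] using g.norm_coe_le_norm _
  set Tmap : BoundedContinuousFunction (Set.Icc ε (ε + δ) × S) ℝ →
      BoundedContinuousFunction (Set.Icc ε (ε + δ) × S) ℝ := fun g =>
    BoundedContinuousFunction.ofNormedAddCommGroup
      (fun p => Real.exp ((ε / α) * Cc) + (1 / α) * ∫ t in ε..(p.1 : ℝ),
        sInf ((fun u => c p.2 u * g (Set.projIcc ε (ε + δ) hle t, p.2)
          + (1 / max t ε) * ∑' j, lam p.2 j u * g (Set.projIcc ε (ε + δ) hle t, j)) '' U p.2))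
      (by
        apply continuous_of_discrete_slices
        intro i
        show Continuous fun x : Set.Icc ε (ε + δ) =>
          Real.exp ((ε / α) * Cc) + (1 / α) * ∫ t in ε..(x : ℝ),
            sInf ((fun u => c i u * g (Set.projIcc ε (ε + δ) hle t, i)
              + (1 / max t ε) * ∑' j, lam i j u * g (Set.projIcc ε (ε + δ) hle t, j)) '' U i)
        refine continuous_const.add (continuous_const.mul ?_)
        exact (intervalIntegral.continuous_primitive (fun a b =>
          intervalIntegrable_of_bounded
            (main_meas (fun t j => g (Set.projIcc ε (ε + δ) hle t, j)) ‖g‖ (norm_nonneg g)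
              (hGc g) (hGB g) i).1
            (main_meas (fun t j => g (Set.projIcc ε (ε + δ) hle t, j)) ‖g‖ (norm_nonneg g)
              (hGc g) (hGB g) i).2 a b) ε).comp continuous_subtype_val)
      (Real.exp ((ε / α) * Cc) + (1 / α) * ((Cc * ‖g‖ + 2 * M * ‖g‖ / ε) * δ))
      (by
        intro p
        have hm := main_meas (fun t j => g (Set.projIcc ε (ε + δ) hle t, j)) ‖g‖
          (norm_nonneg g) (hGc g) (hGB g) p.2
        have hK0 : 0 ≤ Cc * ‖g‖ + 2 * M * ‖g‖ / ε := (abs_nonneg _).trans (hm.2 ε)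
        have hb := intervalIntegral.norm_integral_le_of_norm_le_const
          (C := Cc * ‖g‖ + 2 * M * ‖g‖ / ε) (a := ε) (b := (p.1 : ℝ))
          (f := fun t => sInf ((fun u => c p.2 u * g (Set.projIcc ε (ε + δ) hle t, p.2)
            + (1 / max t ε) * ∑' j, lam p.2 j u * g (Set.projIcc ε (ε + δ) hle t, j)) '' U p.2))
          (fun t _ => by rw [Real.norm_eq_abs]; exact hm.2 t)
        have habsd : |(p.1 : ℝ) - ε| ≤ δ := by
          have h1 := p.1.2.1
          have h2 := p.1.2.2
          rw [abs_of_nonneg (by linarith)]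
          linarith
        have h3 : |∫ t in ε..(p.1 : ℝ),
            sInf ((fun u => c p.2 u * g (Set.projIcc ε (ε + δ) hle t, p.2)
              + (1 / max t ε) * ∑' j, lam p.2 j u * g (Set.projIcc ε (ε + δ) hle t, j)) '' U p.2)|
            ≤ (Cc * ‖g‖ + 2 * M * ‖g‖ / ε) * δ := by
          refine le_trans ?_ (mul_le_mul_of_nonneg_left habsd hK0)
          simpa only [Real.norm_eq_abs] using hb
        rw [Real.norm_eq_abs]
        refine (abs_add_le _ _).trans ?_
        rw [abs_of_pos (Real.exp_pos _), abs_mul,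
          abs_of_nonneg (one_div_nonneg.mpr hα.le)]
        exact add_le_add_right
          (mul_le_mul_of_nonneg_left h3 (one_div_nonneg.mpr hα.le)) _)
    with hTmap
  have hlip : ∀ g₁ g₂ : BoundedContinuousFunction (Set.Icc ε (ε + δ) × S) ℝ,
      dist (Tmap g₁) (Tmap g₂) ≤ β * dist g₁ g₂ := by
    intro g₁ g₂
    rw [BoundedContinuousFunction.dist_le (mul_nonneg hβ0 dist_nonneg)]
    rintro ⟨⟨η, hη⟩, i⟩
    have hk := key (fun t j => g₁ (Set.projIcc ε (ε + δ) hle t, j))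
      (fun t j => g₂ (Set.projIcc ε (ε + δ) hle t, j)) (dist g₁ g₂)
      (fun t _ j => by
        have h := BoundedContinuousFunction.dist_coe_le_dist
          (f := g₁) (g := g₂) (Set.projIcc ε (ε + δ) hle t, j)
        rwa [Real.dist_eq] at h)
      (fun j => (hGc g₁ j).continuousOn) (fun j => (hGc g₂ j).continuousOn)
      ⟨‖g₁‖, fun t j => hGB g₁ t j⟩ ⟨‖g₂‖, fun t j => hGB g₂ t j⟩ η hη i
    beta_reduce at hk
    have e₁ : (∫ t in ε..η, sInf ((fun u => c i u * g₁ (Set.projIcc ε (ε + δ) hle t, i)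
          + (1 / t) * ∑' j, lam i j u * g₁ (Set.projIcc ε (ε + δ) hle t, j)) '' U i))
        = ∫ t in ε..η, sInf ((fun u => c i u * g₁ (Set.projIcc ε (ε + δ) hle t, i)
          + (1 / max t ε) * ∑' j, lam i j u * g₁ (Set.projIcc ε (ε + δ) hle t, j)) '' U i) := by
      refine intervalIntegral.integral_congr fun t ht => ?_
      rw [Set.uIcc_of_le hη.1] at ht
      simp only [max_eq_left ht.1]
    have e₂ : (∫ t in ε..η, sInf ((fun u => c i u * g₂ (Set.projIcc ε (ε + δ) hle t, i)
          + (1 / t) * ∑' j, lam i j u * g₂ (Set.projIcc ε (ε + δ) hle t, j)) '' U i))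
        = ∫ t in ε..η, sInf ((fun u => c i u * g₂ (Set.projIcc ε (ε + δ) hle t, i)
          + (1 / max t ε) * ∑' j, lam i j u * g₂ (Set.projIcc ε (ε + δ) hle t, j)) '' U i) := by
      refine intervalIntegral.integral_congr fun t ht => ?_
      rw [Set.uIcc_of_le hη.1] at ht
      simp only [max_eq_left ht.1]
    rw [e₁, e₂] at hk
    rw [Real.dist_eq]
    exact hk
  have hcontr : ContractingWith ⟨β, hβ0⟩ Tmap :=
    ⟨by exact_mod_cast hβ, LipschitzWith.of_dist_le_mul hlip⟩
  set g₀ := ContractingWith.fixedPoint Tmap hcontr with hg₀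
  have hfix : Tmap g₀ = g₀ := hcontr.fixedPoint_isFixedPt
  refine ⟨fun t j => g₀ (Set.projIcc ε (ε + δ) hle t, j),
    ⟨⟨‖g₀‖, fun t j => hGB g₀ t j⟩, fun j => (hGc g₀ j).continuousOn, ?_⟩, ?_⟩
  · intro η hη i
    show g₀ (Set.projIcc ε (ε + δ) hle η, i)
        = Real.exp ((ε / α) * Cc) + (1 / α) * ∫ t in ε..η,
            sInf ((fun u => c i u * g₀ (Set.projIcc ε (ε + δ) hle t, i)
              + (1 / t) * ∑' j, lam i j u * g₀ (Set.projIcc ε (ε + δ) hle t, j)) '' U i)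
    calc g₀ (Set.projIcc ε (ε + δ) hle η, i) = Tmap g₀ (⟨η, hη⟩, i) := by
          rw [Set.projIcc_of_mem hle hη, hfix]
      _ = Real.exp ((ε / α) * Cc) + (1 / α) * ∫ t in ε..η,
            sInf ((fun u => c i u * g₀ (Set.projIcc ε (ε + δ) hle t, i)
              + (1 / max t ε) * ∑' j, lam i j u * g₀ (Set.projIcc ε (ε + δ) hle t, j)) '' U i) :=
          rfl
      _ = Real.exp ((ε / α) * Cc) + (1 / α) * ∫ t in ε..η,
            sInf ((fun u => c i u * g₀ (Set.projIcc ε (ε + δ) hle t, i)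
              + (1 / t) * ∑' j, lam i j u * g₀ (Set.projIcc ε (ε + δ) hle t, j)) '' U i) := by
          congr 1
          congr 1
          refine intervalIntegral.integral_congr fun t ht => ?_
          rw [Set.uIcc_of_le hη.1] at ht
          simp only [max_eq_left ht.1]
  · rintro f' ⟨⟨B', hB'⟩, hc', heq'⟩ η hη i
    have hg'cont : Continuous fun p : Set.Icc ε (ε + δ) × S => f' (↑p.1) p.2 :=
      continuous_of_discrete_slices fun j =>
        (hc' j).comp_continuous continuous_subtype_val (fun x => x.2)
    set g' := BoundedContinuousFunction.ofNormedAddCommGroup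
      (fun p : Set.Icc ε (ε + δ) × S => f' (↑p.1) p.2) hg'cont B'
      (fun p => by simpa only [Real.norm_eq_abs] using hB' (↑p.1) p.2) with hg'
    have hfix' : Function.IsFixedPt Tmap g' := by
      show Tmap g' = g'
      ext p
      obtain ⟨⟨η', hη'⟩, i'⟩ := p
      show Tmap g' (⟨η', hη'⟩, i') = g' (⟨η', hη'⟩, i')
      have hR : g' (⟨η', hη'⟩, i') = f' η' i' := rfl
      rw [hR]
      calc Tmap g' (⟨η', hη'⟩, i')
          = Real.exp ((ε / α) * Cc) + (1 / α) * ∫ t in ε..η',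
              sInf ((fun u => c i' u * g' (Set.projIcc ε (ε + δ) hle t, i')
                + (1 / max t ε) * ∑' j, lam i' j u * g' (Set.projIcc ε (ε + δ) hle t, j)) '' U i') :=
            rfl
        _ = Real.exp ((ε / α) * Cc) + (1 / α) * ∫ t in ε..η',
              sInf ((fun u => c i' u * f' t i'
                + (1 / t) * ∑' j, lam i' j u * f' t j) '' U i') := by
            congr 1
            congr 1
            refine intervalIntegral.integral_congr fun t ht => ?_
            rw [Set.uIcc_of_le hη'.1] at ht
            have htI : t ∈ Set.Icc ε (ε + δ) := ⟨ht.1, ht.2.trans hη'.2⟩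
            have hg'app : ∀ j : S, g' (Set.projIcc ε (ε + δ) hle t, j) = f' t j := fun j => by
              show f' (↑(Set.projIcc ε (ε + δ) hle t)) j = f' t j
              rw [hproj t htI]
            simp only [hg'app, max_eq_left ht.1]
        _ = f' η' i' := (heq' η' hη' i').symm
    have hg'g₀ : g' = g₀ := by
      rw [hg₀]
      exact hcontr.fixedPoint_unique hfix'
    show f' η i = g₀ (Set.projIcc ε (ε + δ) hle η, i)
    rw [Set.projIcc_of_mem hle hη, ← hg'g₀]
    rfl
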